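/- Let α > 0, c₀ = √(tanh(α)/α), and Ω₁(k) = −αc₀k + ω_α(k) with ω_α(k) = sign(k)·√(αk·tanh(αk)). Then Ω₁ is strictly decreasing on {k : |k| > 1}, i.e., strictly decreasing on (1,∞) and on (−∞,−1). -/

import Mathlib

noncomputable def omegaA (α k : ℝ) : ℝ :=
  Real.sign k * Real.sqrt (α * k * Real.tanh (α * k))

noncomputable def OmegaBr (α : ℝ) (σ : ℝ) (k : ℝ) : ℝ :=
  -α * Real.sqrt (Real.tanh α / α) * k + σ * omegaA α k


open Real

lemma myHasDerivAt_tanh (x : ℝ) : HasDerivAt Real.tanh (1 / Real.cosh x ^ 2) x := by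
  have h : HasDerivAt (fun y => Real.sinh y / Real.cosh y)
      ((Real.cosh x * Real.cosh x - Real.sinh x * Real.sinh x) / Real.cosh x ^ 2) x :=
    (Real.hasDerivAt_sinh x).div (Real.hasDerivAt_cosh x) (Real.cosh_pos x).ne'
  have e : Real.cosh x * Real.cosh x - Real.sinh x * Real.sinh x = 1 := by
    have := Real.cosh_sq_sub_sinh_sq x
    nlinarith [this]
  rw [e] at h
  have : (fun y => Real.sinh y / Real.cosh y) = Real.tanh := by
    funext y; rw [Real.tanh_eq_sinh_div_cosh]
  rwa [this] at h

lemma keyA {x : ℝ} (hx : 0 < x) : x / Real.cosh x ^ 2 < Real.tanh x := by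
  have h1 : x < Real.sinh x := Real.self_lt_sinh_iff.2 hx
  have h2 : 1 ≤ Real.cosh x := Real.one_le_cosh x
  have hc : 0 < Real.cosh x := Real.cosh_pos x
  rw [Real.tanh_eq_sinh_div_cosh]
  rw [div_lt_div_iff₀ (by positivity) hc]
  nlinarith [Real.sinh_pos_iff.2 hx, mul_lt_mul_of_pos_right h1 hc, sq_nonneg (Real.cosh x - 1)]

lemma keyB {α x : ℝ} (hα : 0 < α) (hx : α ≤ x) : α * Real.tanh x ≤ x * Real.tanh α := by
  set φ : ℝ → ℝ := fun t => t * Real.tanh α - α * Real.tanh t with hφ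
  have hd : ∀ t : ℝ, HasDerivAt φ (Real.tanh α - α * (1 / Real.cosh t ^ 2)) t := by
    intro t
    have := ((hasDerivAt_id t).mul_const (Real.tanh α)).sub
      ((myHasDerivAt_tanh t).const_mul α)
    exact this.congr_deriv (by ring)
  have hmono : StrictMonoOn φ (Set.Ici α) := by
    apply strictMonoOn_of_deriv_pos (convex_Ici α)
    · exact fun t _ => (hd t).continuousAt.continuousWithinAt
    · intro t ht
      rw [interior_Ici] at ht
      rw [(hd t).deriv]
      have htpos : 0 < t := hα.trans ht
      have hcc : Real.cosh α < Real.cosh t := by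
        rw [Real.cosh_lt_cosh]
        rw [abs_of_pos hα, abs_of_pos htpos]; exact ht
      have h1 : α / Real.cosh t ^ 2 < α / Real.cosh α ^ 2 := by
        apply div_lt_div_of_pos_left hα (by positivity)
        nlinarith [Real.cosh_pos α, Real.cosh_pos t]
      have h2 : α / Real.cosh α ^ 2 < Real.tanh α := keyA hα
      have : α * (1 / Real.cosh t ^ 2) = α / Real.cosh t ^ 2 := by ring
      rw [this]; linarith
  rcases eq_or_lt_of_le hx with rfl | h
  · exact le_of_eq (by ring)
  · have h0 : φ α < φ x := hmono Set.self_mem_Ici (Set.mem_Ici.2 hx) h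
    simp only [hφ] at h0
    linarith

lemma myTanh_pos {x : ℝ} (hx : 0 < x) : 0 < Real.tanh x := by
  rw [Real.tanh_eq_sinh_div_cosh]
  exact div_pos (Real.sinh_pos_iff.2 hx) (Real.cosh_pos x)

lemma keyF (α : ℝ) (hα : 0 < α) :
    StrictAntiOn (fun k : ℝ =>
      -α * Real.sqrt (Real.tanh α / α) * k + Real.sqrt (α * k * Real.tanh (α * k)))
      (Set.Ioi 1) := by
  set c : ℝ := α * Real.sqrt (Real.tanh α / α) with hc
  have hcnn : 0 ≤ c := by positivity
  have hg : ∀ k : ℝ, HasDerivAt (fun k : ℝ => α * k * Real.tanh (α * k))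
      (α * Real.tanh (α * k) + α * k * (α * (1 / Real.cosh (α * k) ^ 2))) k := by
    intro k
    have h1 : HasDerivAt (fun k : ℝ => α * k) α k := by
      simpa using (hasDerivAt_id k).const_mul α
    have h2 : HasDerivAt (fun k : ℝ => Real.tanh (α * k))
        (α * (1 / Real.cosh (α * k) ^ 2)) k := by
      have := (myHasDerivAt_tanh (α * k)).comp k h1
      exact this.congr_deriv (by ring)
    have := h1.mul h2
    exact this.congr_deriv (by ring)
  have hF : ∀ k : ℝ, 1 < k → HasDerivAt (fun k : ℝ =>
      -α * Real.sqrt (Real.tanh α / α) * k + Real.sqrt (α * k * Real.tanh (α * k)))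
      (-c + (α * Real.tanh (α * k) + α * k * (α * (1 / Real.cosh (α * k) ^ 2))) /
        (2 * Real.sqrt (α * k * Real.tanh (α * k)))) k := by
    intro k hk
    have hkpos : 0 < k := lt_trans one_pos hk
    have hxpos : 0 < α * k := by positivity
    have hgkpos : 0 < α * k * Real.tanh (α * k) :=
      mul_pos hxpos (myTanh_pos hxpos)
    have hlin : HasDerivAt (fun k : ℝ => -α * Real.sqrt (Real.tanh α / α) * k) (-c) k := by
      simpa [hc] using (hasDerivAt_id k).const_mul (-α * Real.sqrt (Real.tanh α / α))
    exact hlin.add ((hg k).sqrt hgkpos.ne')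
  apply strictAntiOn_of_deriv_neg (convex_Ioi 1)
  · exact fun k hk => (hF k hk).continuousAt.continuousWithinAt
  · intro k hk
    rw [interior_Ioi] at hk
    simp only [Set.mem_Ioi] at hk
    rw [(hF k hk).deriv]
    set x : ℝ := α * k with hx
    have hkpos : 0 < k := lt_trans one_pos hk
    have hxα : α < x := by
      rw [hx]; nlinarith
    have hxpos : 0 < x := hα.trans hxα
    have htpos : 0 < Real.tanh x := myTanh_pos hxpos
    have hgkpos : 0 < x * Real.tanh x := mul_pos hxpos htpos
    have hs : 0 < Real.sqrt (x * Real.tanh x) := Real.sqrt_pos.2 hgkpos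
    -- numerator bound
    have hnum : α * Real.tanh x + α * k * (α * (1 / Real.cosh x ^ 2)) <
        2 * (α * Real.tanh x) := by
      have hA : x / Real.cosh x ^ 2 < Real.tanh x := keyA hxpos
      have : α * k * (α * (1 / Real.cosh x ^ 2)) = α * (x / Real.cosh x ^ 2) := by
        rw [hx]; ring
      rw [this]
      nlinarith
    -- tanh x ≤ √(x tanh x) * √(tanh α / α)
    have hB : α * Real.tanh x ≤ x * Real.tanh α := keyB hα hxα.le
    have hle : Real.tanh x ≤ Real.sqrt (x * Real.tanh x) * Real.sqrt (Real.tanh α / α) := by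
      rw [← Real.sqrt_mul hgkpos.le]
      rw [Real.le_sqrt' htpos]
      rw [show x * Real.tanh x * (Real.tanh α / α) = x * Real.tanh α * Real.tanh x / α by
        ring]
      rw [le_div_iff₀ hα]
      nlinarith
    -- conclude
    have hfrac : (α * Real.tanh x + α * k * (α * (1 / Real.cosh x ^ 2))) /
        (2 * Real.sqrt (x * Real.tanh x)) < c := by
      rw [div_lt_iff₀ (by positivity)]
      have : c * (2 * Real.sqrt (x * Real.tanh x))
          = 2 * (α * (Real.sqrt (x * Real.tanh x) * Real.sqrt (Real.tanh α / α))) := by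
        rw [hc]; ring
      rw [this]
      nlinarith
    linarith

theorem OmegaPos_strictAntiOn (α : ℝ) (hα : 0 < α) :
    StrictAntiOn (OmegaBr α 1) (Set.Ioi 1) ∧
      StrictAntiOn (OmegaBr α 1) (Set.Iio (-1)) := by
  have hPos : ∀ k : ℝ, 0 < k → OmegaBr α 1 k =
      -α * Real.sqrt (Real.tanh α / α) * k + Real.sqrt (α * k * Real.tanh (α * k)) := by
    intro k hk
    simp [OmegaBr, omegaA, Real.sign_of_pos hk]
  have hNeg : ∀ k : ℝ, k < 0 → OmegaBr α 1 k =
      -(-α * Real.sqrt (Real.tanh α / α) * (-k) +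
        Real.sqrt (α * (-k) * Real.tanh (α * (-k)))) := by
    intro k hk
    have e : α * (-k) * Real.tanh (α * (-k)) = α * k * Real.tanh (α * k) := by
      rw [show α * (-k) = -(α * k) by ring, Real.tanh_neg, neg_mul_neg]
    rw [e]
    simp [OmegaBr, omegaA, Real.sign_of_neg hk]
    ring
  constructor
  · intro a ha b hb hab
    have ha1 : (1:ℝ) < a := ha
    have hb1 : (1:ℝ) < b := hb
    rw [hPos a (lt_trans one_pos ha1), hPos b (lt_trans one_pos hb1)]
    exact keyF α hα ha hb hab
  · intro a ha b hb hab
    have ha1 : a < -1 := ha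
    have hb1 : b < -1 := hb
    rw [hNeg a (by linarith), hNeg b (by linarith)]
    have h := keyF α hα (by simp [Set.mem_Ioi]; linarith : -b ∈ Set.Ioi (1:ℝ))
      (by simp [Set.mem_Ioi]; linarith : -a ∈ Set.Ioi (1:ℝ)) (by linarith)
    linarith
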